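/- Let B be a C*-algebra, let (Λ, ≤) be a nonempty directed preordered set, and for each F ∈ Λ let C_F be a C*-algebra and t_F : B → C_F a *-homomorphism such that ‖t_{F'}(b)‖ ≤ ‖t_F(b)‖ for all b ∈ B whenever F ≤ F'. Let J be the closure in B of ⋃_{F ∈ Λ} ker(t_F). Then for every b ∈ B the distance from b to J equals the infimum ⨅_{F ∈ Λ} ‖t_F(b)‖ (which, by antitonicity, is the limit of the net F ↦ ‖t_F(b)‖). -/

import Mathlib

open scoped NNReal CStarAlgebra

lemma quasi_nonneg {B : Type*} [NonUnitalCStarAlgebra B] (b : B) :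
    ∀ s ∈ quasispectrum ℝ (star b * b), 0 ≤ s := by
  intro s hs
  rw [Unitization.quasispectrum_eq_spectrum_inr' ℝ ℂ, Unitization.inr_mul,
    Unitization.inr_star] at hs
  exact spectrum_star_mul_self_nonneg s hs

lemma quasi_bound {B : Type*} [NonUnitalCStarAlgebra B] (y : B) (s : ℝ)
    (hs : s ∈ quasispectrum ℝ y) : |s| ≤ ‖y‖ := by
  rw [Unitization.quasispectrum_eq_spectrum_inr' ℝ ℂ] at hs
  simpa [Unitization.norm_inr] using spectrum.norm_le_norm_of_mem hs

lemma infDist_ker_le {B D : Type*} [NonUnitalCStarAlgebra B] [NonUnitalCStarAlgebra D]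
    (φ : B →⋆ₙₐ[ℂ] D) (b : B) :
    Metric.infDist b {x : B | φ x = 0} ≤ ‖φ b‖ := by
  have hφc : Continuous φ := map_continuous φ
  refine le_of_forall_pos_le_add fun δ hδ => ?_
  have hr0 : (0:ℝ) ≤ ‖φ b‖ := norm_nonneg _
  set r : ℝ := ‖φ b‖ with hr
  obtain ⟨c, hc, hc0, hcr⟩ : ∃ c : ℝ, c = (r + δ) ^ 2 ∧ 0 < c ∧ r * r ≤ c :=
    ⟨(r + δ) ^ 2, rfl, by positivity, by nlinarith⟩
  set a : B := star b * b with ha_def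
  have ha : IsSelfAdjoint a := IsSelfAdjoint.star_mul_self b
  set g : ℝ → ℝ := fun s => max (s - c) 0 / max s c with hg_def
  have hgc : Continuous g := by
    apply Continuous.div (by fun_prop) (by fun_prop)
    intro s
    exact ne_of_gt (lt_max_of_lt_right hc0)
  have hg0 : g 0 = 0 := by simp [hg_def, hc0.le]
  have hgzero : ∀ s ≤ c, g s = 0 := fun s hs => by
    have h' : max (s - c) 0 = 0 := max_eq_right (by linarith)
    simp [hg_def, h']
  set G : B := cfcₙ g a with hG_def
  have hGsa : IsSelfAdjoint G := cfcₙ_predicate g a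
  have hφa : φ a = star (φ b) * φ b := by simp [ha_def, map_mul, map_star]
  have hφG : φ G = 0 := by
    have h1 : φ G = cfcₙ g (φ a) :=
      NonUnitalStarAlgHomClass.map_cfcₙ φ g a hgc.continuousOn hg0 hφc ha (ha.map φ)
    rw [h1]
    have h2 : (quasispectrum ℝ (φ a)).EqOn g (fun _ => 0) := by
      intro s hs
      have hb1 : |s| ≤ ‖φ a‖ := quasi_bound _ s hs
      have hb2 : ‖φ a‖ = r * r := by rw [hφa, CStarRing.norm_star_mul_self]
      have hsc : s ≤ c := le_trans (le_trans (le_abs_self s) (hb2 ▸ hb1)) hcr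
      exact hgzero s hsc
    rw [cfcₙ_congr h2]
    exact cfcₙ_const_zero ℝ (φ a)
  have hxker : b * G ∈ {x : B | φ x = 0} := by
    simp only [Set.mem_setOf_eq, map_mul, hφG, mul_zero]
  have e1 : a * G = cfcₙ (fun s => s * g s) a := by
    conv_lhs => rw [← cfcₙ_id' ℝ a ha, hG_def]
    rw [← cfcₙ_mul _ _ a (by fun_prop) rfl hgc.continuousOn hg0]
  have e2 : G * a = cfcₙ (fun s => g s * s) a := by
    conv_lhs => rw [← cfcₙ_id' ℝ a ha, hG_def]
    rw [← cfcₙ_mul _ _ a hgc.continuousOn hg0 (by fun_prop) rfl]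
  have e3 : G * (a * G) = cfcₙ (fun s => g s * (s * g s)) a := by
    rw [e1, hG_def, ← cfcₙ_mul _ _ a hgc.continuousOn hg0
      (by fun_prop) (by simp [hg0])]
  have key : cfcₙ (fun s => (1 - g s) ^ 2 * s) a = star (b - b * G) * (b - b * G) := by
    have hz2 : star (b - b * G) * (b - b * G) = a - a * G - (G * a - G * (a * G)) := by
      rw [star_sub, star_mul, hGsa.star_eq, ha_def]
      noncomm_ring
    calc cfcₙ (fun s => (1 - g s) ^ 2 * s) a
        = cfcₙ (fun s => (s - s * g s) - (g s * s - g s * (s * g s))) a :=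
          cfcₙ_congr (fun s _ => by ring)
      _ = cfcₙ (fun s => s - s * g s) a - cfcₙ (fun s => g s * s - g s * (s * g s)) a :=
          cfcₙ_sub _ _ a (by fun_prop) (by simp [hg0]) (by fun_prop) (by simp [hg0])
      _ = (cfcₙ (fun s : ℝ => s) a - cfcₙ (fun s => s * g s) a) -
            (cfcₙ (fun s => g s * s) a - cfcₙ (fun s => g s * (s * g s)) a) := by
          rw [cfcₙ_sub _ _ a (by fun_prop) rfl (by fun_prop) (by simp [hg0]),
            cfcₙ_sub _ _ a (by fun_prop) (by simp [hg0]) (by fun_prop) (by simp [hg0])]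
      _ = a - a * G - (G * a - G * (a * G)) := by
          rw [cfcₙ_id' ℝ a ha, ← e1, ← e2, ← e3]
      _ = star (b - b * G) * (b - b * G) := hz2.symm
  have h2 : ‖star (b - b * G) * (b - b * G)‖ ≤ c := by
    rw [← key]
    apply norm_cfcₙ_le
    intro s hs
    have hs0 : 0 ≤ s := quasi_nonneg b s hs
    rw [Real.norm_eq_abs]
    rcases le_or_gt s c with h | h
    · rw [hgzero s h, abs_of_nonneg (by simpa using hs0)]
      simpa using h
    · have hs0' : 0 < s := lt_trans hc0 h
      have h1g : 1 - g s = c / s := by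
        rw [hg_def]
        simp only
        rw [max_eq_left (by linarith), max_eq_left (by linarith)]
        field_simp
        ring
      rw [h1g]
      have hval : (c / s) ^ 2 * s = c ^ 2 / s := by
        field_simp
      rw [hval, abs_of_nonneg (by positivity), div_le_iff₀ hs0']
      nlinarith
  have hnorm : ‖b - b * G‖ ≤ r + δ := by
    have h1 : ‖b - b * G‖ * ‖b - b * G‖ = ‖star (b - b * G) * (b - b * G)‖ :=
      (CStarRing.norm_star_mul_self).symm
    nlinarith [norm_nonneg (b - b * G)]
  calc Metric.infDist b {x : B | φ x = 0} ≤ dist b (b * G) :=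
        Metric.infDist_le_dist_of_mem hxker
    _ = ‖b - b * G‖ := dist_eq_norm _ _
    _ ≤ r + δ := hnorm

section helpers

lemma hom_norm_le'' {B D : Type*} [NonUnitalNormedRing B] [StarRing B] [CStarRing B]
    [NormedSpace ℂ B] [IsScalarTower ℂ B B] [SMulCommClass ℂ B B] [StarModule ℂ B]
    [CompleteSpace B] [NonUnitalNormedRing D] [StarRing D] [CStarRing D]
    [NormedSpace ℂ D] [IsScalarTower ℂ D D] [SMulCommClass ℂ D D] [StarModule ℂ D]
    [CompleteSpace D] (phi : B →⋆ₙₐ[ℂ] D) (x : B) : ‖phi x‖ ≤ ‖x‖ := by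
  letI i3 : NonUnitalAlgHomClass (B →⋆ₙₐ[ℂ] D) ℂ B D := inferInstance
  letI i4 : StarHomClass (B →⋆ₙₐ[ℂ] D) B D := inferInstance
  letI iB : NonUnitalCStarAlgebra B := {}
  letI iD : NonUnitalCStarAlgebra D := {}
  exact @NonUnitalStarAlgHom.norm_apply_le _ _ _ iB iD _ i3 i4 phi x

lemma infDist_ker_le'' {B D : Type*} [NonUnitalNormedRing B] [StarRing B] [CStarRing B]
    [NormedSpace ℂ B] [IsScalarTower ℂ B B] [SMulCommClass ℂ B B] [StarModule ℂ B]
    [CompleteSpace B] [NonUnitalNormedRing D] [StarRing D] [CStarRing D]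
    [NormedSpace ℂ D] [IsScalarTower ℂ D D] [SMulCommClass ℂ D D] [StarModule ℂ D]
    [CompleteSpace D] (phi : B →⋆ₙₐ[ℂ] D) (b : B) :
    Metric.infDist b {x : B | phi x = 0} ≤ ‖phi b‖ := by
  letI iB : NonUnitalCStarAlgebra B := {}
  letI iD : NonUnitalCStarAlgebra D := {}
  exact @infDist_ker_le B D iB iD phi b

end helpers



/-- With `B`, `Λ`, `C F`, `t F` as in Statement 0 (monotone norms along the
directed set), and `J` the closure of `⋃ F, ker (t F)`, the distance from any `b ∈ B` to `J`
equals `⨅ F, ‖t F b‖`. -/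
theorem stmt_1 {B : Type*} [NonUnitalNormedRing B] [StarRing B] [CStarRing B]
    [NormedSpace ℂ B] [IsScalarTower ℂ B B] [SMulCommClass ℂ B B] [StarModule ℂ B]
    [CompleteSpace B]
    {Λ : Type*} [Preorder Λ] [Nonempty Λ] [IsDirected Λ (· ≤ ·)]
    {C : Λ → Type*} [∀ F, NonUnitalNormedRing (C F)] [∀ F, StarRing (C F)]
    [∀ F, CStarRing (C F)] [∀ F, NormedSpace ℂ (C F)] [∀ F, IsScalarTower ℂ (C F) (C F)]
    [∀ F, SMulCommClass ℂ (C F) (C F)] [∀ F, StarModule ℂ (C F)] [∀ F, CompleteSpace (C F)]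
    (t : ∀ F, B →⋆ₙₐ[ℂ] C F)
    (hmono : ∀ ⦃F F' : Λ⦄, F ≤ F' → ∀ b : B, ‖t F' b‖ ≤ ‖t F b‖) :
    ∀ b : B, Metric.infDist b (closure (⋃ F, {x : B | t F x = 0})) = ⨅ F, ‖t F b‖ := by
  intro b
  have hbdd : BddBelow (Set.range fun F => ‖t F b‖) :=
    ⟨0, by rintro _ ⟨F, rfl⟩; exact norm_nonneg _⟩
  have hne : ∀ F, ({x : B | t F x = 0} : Set B).Nonempty := fun F => ⟨0, by simp⟩
  refine le_antisymm ?_ ?_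
  · refine le_ciInf fun F => ?_
    calc Metric.infDist b (closure (⋃ F, {x : B | t F x = 0}))
        ≤ Metric.infDist b {x : B | t F x = 0} :=
          Metric.infDist_le_infDist_of_subset
            ((Set.subset_iUnion (fun F => {x : B | t F x = 0}) F).trans subset_closure) (hne F)
      _ ≤ ‖t F b‖ := infDist_ker_le'' (t F) b
  · rw [Metric.infDist_closure]
    have hSne : (⋃ F, {x : B | t F x = 0}).Nonempty :=
      ⟨0, Set.mem_iUnion.2 ⟨Classical.arbitrary Λ, by simp⟩⟩
    haveI : Nonempty (⋃ F, {x : B | t F x = 0} : Set B) := hSne.to_subtype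
    rw [Metric.infDist_eq_iInf]
    refine le_ciInf fun yy => ?_
    obtain ⟨y, hy⟩ := yy
    obtain ⟨F, hF⟩ := Set.mem_iUnion.1 hy
    calc (⨅ F, ‖t F b‖) ≤ ‖t F b‖ := ciInf_le hbdd F
      _ = ‖t F (b - y)‖ := by rw [map_sub, Set.mem_setOf_eq.mp hF, sub_zero]
      _ ≤ ‖b - y‖ := hom_norm_le'' (t F) (b - y)
      _ = dist b y := (dist_eq_norm b y).symm
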